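/- If G is a group and H is a normal subgroup of G such that the quotient G/H is cyclic, then the derived subgroup of G equals the commutator subgroup [G,H], i.e. [G,G] = [G,H]. -/

import Mathlib

open scoped commutatorElement

/-- If `G/H` is cyclic for a normal subgroup `H` of `G`, then `[G,G] = [G,H]`. -/
theorem commutator_eq_commutator_normal_of_cyclic_quotient {G : Type*} [Group G]
    (H : Subgroup G) [H.Normal] (hcyc : IsCyclic (G ⧸ H)) :
    commutator G = ⁅(⊤ : Subgroup G), H⁆ := by
  apply le_antisymm
  · set K : Subgroup G := ⁅(⊤ : Subgroup G), H⁆ with hK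
    have hKH : K ≤ H := Subgroup.commutator_le_right ⊤ H
    let f : G ⧸ K →* G ⧸ H := QuotientGroup.map K H (MonoidHom.id G) hKH
    have hker : f.ker ≤ Subgroup.center (G ⧸ K) := by
      intro x hx
      obtain ⟨g, rfl⟩ := QuotientGroup.mk_surjective x
      have hg : g ∈ H := by
        have : (g : G ⧸ H) = 1 := hx
        exact (QuotientGroup.eq_one_iff g).mp this
      rw [Subgroup.mem_center_iff]
      intro y
      obtain ⟨a, rfl⟩ := QuotientGroup.mk_surjective y
      have : ⁅a, g⁆ ∈ K :=
        Subgroup.commutator_mem_commutator (Subgroup.mem_top a) hg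
      have h1 : ((⁅a, g⁆ : G) : G ⧸ K) = 1 := (QuotientGroup.eq_one_iff _).mpr this
      have h2 : ⁅(a : G ⧸ K), (g : G ⧸ K)⁆ = 1 := by
        simpa [commutatorElement_def] using h1
      have := commutatorElement_eq_one_iff_mul_comm.mp h2
      rw [this]
    have hcomm : ∀ a b : G ⧸ K, a * b = b * a :=
      commutative_of_cyclic_center_quotient f hker
    rw [commutator_def, Subgroup.commutator_le]
    intro g₁ _ g₂ _
    apply (QuotientGroup.eq_one_iff (⁅g₁, g₂⁆ : G)).mp
    have h : ((⁅g₁, g₂⁆ : G) : G ⧸ K) = ⁅(g₁ : G ⧸ K), (g₂ : G ⧸ K)⁆ := by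
      simp [commutatorElement_def]
    rw [h, commutatorElement_eq_one_iff_mul_comm]
    exact hcomm _ _
  · calc ⁅(⊤ : Subgroup G), H⁆ ≤ ⁅(⊤ : Subgroup G), (⊤ : Subgroup G)⁆ :=
        Subgroup.commutator_mono le_rfl le_top
      _ = commutator G := rfl
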